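/- For n ≥ 3 and 0 < R < √((n-2)/n), the function u_R(x) = (1-|x|²)/2 - Rⁿ/((n-2)|x|^(n-2)) satisfies Δu_R = -n on the annulus Ω_R = {x ∈ ℝⁿ : r₁ < |x| < r₂}, vanishes on ∂Ω_R, and is positive in Ω_R. -/

import Mathlib

open Set

noncomputable section

/-- The Euclidean Laplacian: sum of the pure second partial derivatives. -/
def lap {n : ℕ} (u : EuclideanSpace ℝ (Fin n) → ℝ) (x : EuclideanSpace ℝ (Fin n)) : ℝ :=
  ∑ i, iteratedFDeriv ℝ 2 u x ![EuclideanSpace.single i 1, EuclideanSpace.single i 1]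

lemma hasDerivAt_g (c p t : ℝ) (ht : 0 < t) :
    HasDerivAt (fun t : ℝ => (1 - t) / 2 - c * t ^ (-p))
      (-(1/2) + (c * p) * t ^ (-p - 1)) t := by
  have h1 : HasDerivAt (fun t : ℝ => t ^ (-p)) (-p * t ^ (-p - 1)) t := by
    simpa using Real.hasDerivAt_rpow_const (p := -p) (Or.inl ht.ne')
  have h2 : HasDerivAt (fun t : ℝ => (1 - t) / 2) (-(1/2)) t := by
    have := ((hasDerivAt_id t).const_sub 1).div_const 2
    exact this.congr_deriv (by norm_num)
  exact (h2.sub (h1.const_mul c)).congr_deriv (by ring)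

lemma hasDerivAt_g1 (c p t : ℝ) (ht : 0 < t) :
    HasDerivAt (fun t : ℝ => -(1/2) + (c * p) * t ^ (-p - 1))
      (-(c * p * (p + 1)) * t ^ (-p - 2)) t := by
  have h1 : HasDerivAt (fun t : ℝ => t ^ (-p - 1)) ((-p - 1) * t ^ (-p - 2)) t := by
    have := Real.hasDerivAt_rpow_const (p := -p - 1) (Or.inl ht.ne') (x := t)
    convert this using 2
    ring
  exact ((h1.const_mul (c * p)).const_add (-(1/2))).congr_deriv (by ring)

variable {E : Type*} [NormedAddCommGroup E] [InnerProductSpace ℝ E]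

lemma second_deriv_radial (c p : ℝ) (u : E → ℝ)
    (hu : ∀ y : E, y ≠ 0 → u y = (1 - ‖y‖ ^ 2) / 2 - c * (‖y‖ ^ 2) ^ (-p))
    (x : E) (hx : x ≠ 0) (v : E) :
    iteratedFDeriv ℝ 2 u x ![v, v]
      = (-(1/2) + (c * p) * (‖x‖ ^ 2) ^ (-p - 1)) * (2 * (inner ℝ v v : ℝ))
        + (-(c * p * (p + 1)) * (‖x‖ ^ 2) ^ (-p - 2)) * (2 * (inner ℝ x v : ℝ))
          * (2 * (inner ℝ x v : ℝ)) := by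
  set F : E → (E →L[ℝ] ℝ) :=
    fun y => (-(1/2) + (c * p) * (‖y‖ ^ 2) ^ (-p - 1)) • (2 • innerSL ℝ y) with hFdef
  have hpos : ∀ y : E, y ≠ 0 → (0:ℝ) < ‖y‖ ^ 2 := by
    intro y hy; exact pow_pos (norm_pos_iff.mpr hy) 2
  have hu' : ∀ y : E, y ≠ 0 → HasFDerivAt u (F y) y := by
    intro y hy
    have hg := (hasDerivAt_g c p _ (hpos y hy)).comp_hasFDerivAt y
      (hasStrictFDerivAt_norm_sq y).hasFDerivAt
    refine hg.congr_of_eventuallyEq ?_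
    filter_upwards [isOpen_compl_singleton.mem_nhds hy] with z hz
    exact hu z hz
  have hc : HasFDerivAt (fun y : E => -(1/2) + (c * p) * (‖y‖ ^ 2) ^ (-p - 1))
      ((-(c * p * (p + 1)) * (‖x‖ ^ 2) ^ (-p - 2)) • (2 • innerSL ℝ x)) x := by
    have := (hasDerivAt_g1 c p _ (hpos x hx)).comp_hasFDerivAt x
      (hasStrictFDerivAt_norm_sq x).hasFDerivAt
    exact this
  have hf : HasFDerivAt (fun y : E => (2 • innerSL ℝ y : E →L[ℝ] ℝ))
      (2 • (innerSL ℝ : E →L[ℝ] E →L[ℝ] ℝ)) x :=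
    (2 • (innerSL ℝ : E →L[ℝ] E →L[ℝ] ℝ)).hasFDerivAt
  have hF : HasFDerivAt F
      ((-(1/2) + (c * p) * (‖x‖ ^ 2) ^ (-p - 1)) • (2 • (innerSL ℝ : E →L[ℝ] E →L[ℝ] ℝ))
        + ((-(c * p * (p + 1)) * (‖x‖ ^ 2) ^ (-p - 2)) • (2 • innerSL ℝ x)).smulRight
            (2 • innerSL ℝ x)) x := hc.smul hf
  have h1 : fderiv ℝ u =ᶠ[nhds x] F := by
    filter_upwards [isOpen_compl_singleton.mem_nhds hx] with y hy
    exact (hu' y hy).fderiv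
  rw [iteratedFDeriv_two_apply, h1.fderiv_eq, hF.fderiv]
  simp only [Matrix.cons_val_zero, Matrix.cons_val_one, Matrix.head_cons,
    ContinuousLinearMap.add_apply, ContinuousLinearMap.smul_apply,
    ContinuousLinearMap.smulRight_apply, innerSL_apply_apply, smul_eq_mul, nsmul_eq_mul,
    Nat.cast_ofNat]
  rfl

-- conversion lemma: rpow form vs the statement's nat-pow form
lemma conv1 (n : ℕ) (hn : 3 ≤ n) (R a : ℝ) (ha : 0 < a) :
    (R ^ n / ((n : ℝ) - 2)) * (a ^ 2) ^ (-(((n : ℝ) - 2) / 2)) =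
      R ^ n / (((n : ℝ) - 2) * a ^ (n - 2)) := by
  have hn2 : (0:ℝ) < (n : ℝ) - 2 := by
    have : (3:ℝ) ≤ n := by exact_mod_cast hn
    linarith
  have hcast : ((n - 2 : ℕ) : ℝ) = (n : ℝ) - 2 := by
    have := Nat.cast_sub (show 2 ≤ n by omega) (R := ℝ); exact_mod_cast this
  have hkey : (a ^ 2 : ℝ) ^ (-(((n : ℝ) - 2) / 2)) = (a ^ (n - 2) : ℝ)⁻¹ := by
    rw [← Real.rpow_natCast a 2, ← Real.rpow_mul ha.le,
      show ((2:ℕ):ℝ) * (-(((n : ℝ) - 2) / 2)) = -(((n - 2 : ℕ)):ℝ) by rw [hcast]; push_cast; ring,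
      Real.rpow_neg ha.le, Real.rpow_natCast]
  rw [hkey, ← div_div, div_eq_mul_inv]
  ring

lemma lap_eq (n : ℕ) (hn : 3 ≤ n) (R : ℝ) (x : EuclideanSpace ℝ (Fin n)) (hx : x ≠ 0) :
    lap (fun y : EuclideanSpace ℝ (Fin n) =>
        (1 - ‖y‖ ^ 2) / 2 - R ^ n / (((n : ℝ) - 2) * ‖y‖ ^ (n - 2))) x = -n := by
  have hn2 : (0:ℝ) < (n : ℝ) - 2 := by
    have : (3:ℝ) ≤ n := by exact_mod_cast hn
    linarith
  set p : ℝ := ((n : ℝ) - 2) / 2 with hp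
  set c : ℝ := R ^ n / ((n : ℝ) - 2) with hc
  have hterm : ∀ i, iteratedFDeriv ℝ 2
      (fun y : EuclideanSpace ℝ (Fin n) =>
        (1 - ‖y‖ ^ 2) / 2 - R ^ n / (((n : ℝ) - 2) * ‖y‖ ^ (n - 2))) x
      ![EuclideanSpace.single i 1, EuclideanSpace.single i 1]
      = (-(1/2) + (c * p) * (‖x‖ ^ 2) ^ (-p - 1)) * 2
        + (-(c * p * (p + 1)) * (‖x‖ ^ 2) ^ (-p - 2)) * (2 * x i) * (2 * x i) := by
    intro i
    have h2 := second_deriv_radial c p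
      (fun y : EuclideanSpace ℝ (Fin n) =>
        (1 - ‖y‖ ^ 2) / 2 - R ^ n / (((n : ℝ) - 2) * ‖y‖ ^ (n - 2)))
      (fun y hy => by
        show (1 - ‖y‖ ^ 2) / 2 - R ^ n / (((n : ℝ) - 2) * ‖y‖ ^ (n - 2)) = _
        rw [← conv1 n hn R ‖y‖ (norm_pos_iff.mpr hy)])
      x hx (EuclideanSpace.single i 1)
    rw [h2]
    simp [EuclideanSpace.inner_single_left, EuclideanSpace.inner_single_right,
      EuclideanSpace.single_apply]
  rw [lap]
  simp only [hterm]
  rw [Finset.sum_add_distrib, Finset.sum_const, Finset.card_univ, Fintype.card_fin]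
  have hnorm : ∑ i, x i * x i = ‖x‖ ^ 2 := by
    rw [EuclideanSpace.norm_eq, Real.sq_sqrt (by positivity)]
    exact Finset.sum_congr rfl fun i _ => by rw [Real.norm_eq_abs, sq_abs, sq]
  have hx2 : ∑ i, (-(c * p * (p + 1)) * (‖x‖ ^ 2) ^ (-p - 2)) * (2 * x i) * (2 * x i)
      = (4 * (-(c * p * (p + 1)) * (‖x‖ ^ 2) ^ (-p - 2))) * ‖x‖ ^ 2 := by
    have e : ∀ i : Fin n, (-(c * p * (p + 1)) * (‖x‖ ^ 2) ^ (-p - 2)) * (2 * x i) * (2 * x i)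
        = (4 * (-(c * p * (p + 1)) * (‖x‖ ^ 2) ^ (-p - 2))) * (x i * x i) := fun i => by ring
    rw [Finset.sum_congr rfl fun i _ => e i, ← Finset.mul_sum, hnorm]
  rw [hx2, nsmul_eq_mul]
  have hs : (0:ℝ) < ‖x‖ ^ 2 := pow_pos (norm_pos_iff.mpr hx) 2
  have hss : (‖x‖ ^ 2 : ℝ) * (‖x‖ ^ 2) ^ (-p - 2) = (‖x‖ ^ 2) ^ (-p - 1) := by
    rw [show (-p - 1 : ℝ) = 1 + (-p - 2) by ring, Real.rpow_add hs, Real.rpow_one]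
  simp only [hc] at hterm ⊢
  rw [hp] at hss ⊢
  linear_combination (-(4 * (R ^ n / ((n:ℝ) - 2)) * (((n:ℝ) - 2) / 2)
    * ((((n:ℝ) - 2) / 2) + 1))) * hss

-- strict concavity of f(r) = 1 - r^2 - K * r^(2-n) on (0,∞), K > 0
lemma strictConcave_f (n : ℕ) (hn : 3 ≤ n) (K : ℝ) (hK : 0 < K) :
    StrictConcaveOn ℝ (Ioi (0:ℝ))
      (fun r : ℝ => 1 - r ^ 2 - K * r ^ ((2:ℤ) - (n:ℤ))) := by
  set f : ℝ → ℝ := fun r => 1 - r ^ 2 - K * r ^ ((2:ℤ) - (n:ℤ)) with hf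
  set f₁ : ℝ → ℝ := fun r => -(2*r) - K * (((2:ℤ) - (n:ℤ) : ℤ) : ℝ) * r ^ ((1:ℤ) - (n:ℤ))
    with hf₁
  have hd1 : ∀ r : ℝ, r ≠ 0 → HasDerivAt f (f₁ r) r := by
    intro r hr
    have h1 : HasDerivAt (fun r : ℝ => r ^ ((2:ℤ) - (n:ℤ)))
        ((((2:ℤ) - (n:ℤ) : ℤ) : ℝ) * r ^ ((2:ℤ) - (n:ℤ) - 1)) r :=
      hasDerivAt_zpow _ r (Or.inl hr)
    have h2 : HasDerivAt (fun r : ℝ => 1 - r ^ 2) (-(2*r)) r := by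
      simpa using (hasDerivAt_pow 2 r).const_sub 1
    have := h2.sub (h1.const_mul K)
    refine this.congr_deriv ?_
    simp only [hf₁]
    rw [show (1:ℤ) - (n:ℤ) = (2:ℤ) - (n:ℤ) - 1 by ring]
    ring
  have hd2 : ∀ r : ℝ, r ≠ 0 → HasDerivAt f₁
      (-2 - K * (((2:ℤ) - (n:ℤ) : ℤ) : ℝ) * (((1:ℤ) - (n:ℤ) : ℤ) : ℝ) * r ^ (-(n:ℤ))) r := by
    intro r hr
    have h1 : HasDerivAt (fun r : ℝ => r ^ ((1:ℤ) - (n:ℤ)))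
        ((((1:ℤ) - (n:ℤ) : ℤ) : ℝ) * r ^ ((1:ℤ) - (n:ℤ) - 1)) r :=
      hasDerivAt_zpow _ r (Or.inl hr)
    have h2 : HasDerivAt (fun r : ℝ => -(2*r)) (-2) r := by
      exact ((hasDerivAt_id r).const_mul (2:ℝ)).neg.congr_deriv (by norm_num)
    have := h2.sub ((h1.const_mul (K * (((2:ℤ) - (n:ℤ) : ℤ) : ℝ))))
    refine this.congr_deriv ?_
    rw [show (1:ℤ) - (n:ℤ) - 1 = -(n:ℤ) by ring]
    ring
  apply strictConcaveOn_of_deriv2_neg (convex_Ioi 0)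
  · intro r hr
    exact ((hd1 r (ne_of_gt hr)).differentiableAt.continuousAt).continuousWithinAt
  · intro r hr
    rw [interior_Ioi] at hr
    have hr0 : (0:ℝ) < r := hr
    have hder : deriv f =ᶠ[nhds r] f₁ := by
      filter_upwards [isOpen_compl_singleton.mem_nhds (ne_of_gt hr0)] with y hy
      exact (hd1 y hy).deriv
    have : deriv (deriv f) r
        = -2 - K * (((2:ℤ) - (n:ℤ) : ℤ) : ℝ) * (((1:ℤ) - (n:ℤ) : ℤ) : ℝ) * r ^ (-(n:ℤ)) := by
      rw [hder.deriv_eq]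
      exact (hd2 r (ne_of_gt hr0)).deriv
    have hit : deriv^[2] f r = deriv (deriv f) r := by
      simp [Function.iterate_succ, Function.comp]
    rw [hit, this]
    have hzp : (0:ℝ) < r ^ (-(n:ℤ)) := zpow_pos hr0 _
    have hnn : ((3:ℝ)) ≤ (n:ℝ) := by exact_mod_cast hn
    have hprod : (0:ℝ) < K * (((2:ℤ) - (n:ℤ) : ℤ) : ℝ) * (((1:ℤ) - (n:ℤ) : ℤ) : ℝ) := by
      push_cast
      have h1 : ((2:ℝ) - n) < 0 := by linarith
      have h2 : ((1:ℝ) - n) < 0 := by linarith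
      nlinarith [mul_pos hK (mul_pos_of_neg_of_neg h1 h2)]
    nlinarith

-- conversion: zpow form equals statement form for r ≠ 0
lemma conv2 (n : ℕ) (hn : 3 ≤ n) (K r : ℝ) (hr : r ≠ 0) :
    K * r ^ ((2:ℤ) - (n:ℤ)) = K / r ^ (n - 2) := by
  have h : (2:ℤ) - (n:ℤ) = -((n - 2 : ℕ) : ℤ) := by omega
  rw [h, zpow_neg, zpow_natCast, div_eq_mul_inv]

/-- the model function
`u_R(x) = (1-|x|²)/2 - Rⁿ/((n-2)|x|^(n-2))` satisfies `Δu_R = -n` on the annulus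
`Ω_R = {r₁ < |x| < r₂}`, vanishes on its boundary (the two spheres), and is
positive inside. -/
theorem serrin_ring_model_solution (n : ℕ) (hn : 3 ≤ n) (R : ℝ)
    (hR0 : 0 < R) (hRmax : R < Real.sqrt (((n : ℝ) - 2) / n))
    (r₁ r₂ : ℝ) (hr₁0 : 0 < r₁) (hr₁R : r₁ < R) (hRr₂ : R < r₂)
    (hz₁ : 1 - r₁ ^ 2 - 2 * R ^ n / (((n : ℝ) - 2) * r₁ ^ (n - 2)) = 0)
    (hz₂ : 1 - r₂ ^ 2 - 2 * R ^ n / (((n : ℝ) - 2) * r₂ ^ (n - 2)) = 0) :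
    (∀ x : EuclideanSpace ℝ (Fin n), r₁ < ‖x‖ → ‖x‖ < r₂ →
      lap (fun y : EuclideanSpace ℝ (Fin n) =>
        (1 - ‖y‖ ^ 2) / 2 - R ^ n / (((n : ℝ) - 2) * ‖y‖ ^ (n - 2))) x = -n) ∧
    (∀ x : EuclideanSpace ℝ (Fin n), ‖x‖ = r₁ ∨ ‖x‖ = r₂ →
      (1 - ‖x‖ ^ 2) / 2 - R ^ n / (((n : ℝ) - 2) * ‖x‖ ^ (n - 2)) = 0) ∧
    (∀ x : EuclideanSpace ℝ (Fin n), r₁ < ‖x‖ → ‖x‖ < r₂ →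
      0 < (1 - ‖x‖ ^ 2) / 2 - R ^ n / (((n : ℝ) - 2) * ‖x‖ ^ (n - 2))) := by
  have hn2 : (0:ℝ) < (n : ℝ) - 2 := by
    have : (3:ℝ) ≤ n := by exact_mod_cast hn
    linarith
  refine ⟨?_, ?_, ?_⟩
  · intro x hx1 _
    have hx0 : x ≠ 0 := by
      intro h
      rw [h, norm_zero] at hx1
      linarith
    exact lap_eq n hn R x hx0
  · intro x hx
    have key : ∀ r : ℝ, (1 - r ^ 2 - 2 * R ^ n / (((n : ℝ) - 2) * r ^ (n - 2)) = 0) →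
        (1 - r ^ 2) / 2 - R ^ n / (((n : ℝ) - 2) * r ^ (n - 2)) = 0 := by
      intro r h
      rw [mul_div_assoc] at h
      linarith
    rcases hx with h | h <;> rw [h]
    · exact key r₁ hz₁
    · exact key r₂ hz₂
  · intro x hx1 hx2
    set K : ℝ := 2 * R ^ n / ((n : ℝ) - 2) with hKdef
    have hK : 0 < K := div_pos (by positivity) hn2
    have hcc := strictConcave_f n hn K hK
    have hfr : ∀ r : ℝ, r ≠ 0 → (1 - r ^ 2 - K * r ^ ((2:ℤ) - (n:ℤ)))
        = 1 - r ^ 2 - 2 * R ^ n / (((n : ℝ) - 2) * r ^ (n - 2)) := by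
      intro r hr
      rw [conv2 n hn K r hr, hKdef, div_div]
    set r := ‖x‖ with hrdef
    have hr0 : 0 < r := lt_trans hr₁0 hx1
    have h12 : r₁ < r₂ := by linarith
    have hr₂0 : 0 < r₂ := by linarith
    set a : ℝ := (r₂ - r) / (r₂ - r₁) with hadef
    set b : ℝ := (r - r₁) / (r₂ - r₁) with hbdef
    have ha : 0 < a := div_pos (by linarith) (by linarith)
    have hb : 0 < b := div_pos (by linarith) (by linarith)
    have hne : r₂ - r₁ ≠ 0 := by linarith
    have hab : a + b = 1 := by
      rw [hadef, hbdef, ← add_div, div_eq_one_iff_eq hne]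
      ring
    have hcomb : a * r₁ + b * r₂ = r := by
      rw [hadef, hbdef, div_mul_eq_mul_div, div_mul_eq_mul_div, ← add_div,
        div_eq_iff hne]
      ring
    have hlt := hcc.2 (mem_Ioi.mpr hr₁0) (mem_Ioi.mpr hr₂0) (ne_of_lt h12) ha hb hab
    simp only [smul_eq_mul] at hlt
    rw [hcomb] at hlt
    have hf1 : (1 - r₁ ^ 2 - K * r₁ ^ ((2:ℤ) - (n:ℤ))) = 0 := by
      rw [hfr r₁ hr₁0.ne']; exact hz₁
    have hf2 : (1 - r₂ ^ 2 - K * r₂ ^ ((2:ℤ) - (n:ℤ))) = 0 := by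
      rw [hfr r₂ hr₂0.ne']; exact hz₂
    have hpos : 0 < 1 - r ^ 2 - K * r ^ ((2:ℤ) - (n:ℤ)) := by
      calc (0:ℝ) = a * 0 + b * 0 := by ring
      _ = a * (1 - r₁ ^ 2 - K * r₁ ^ ((2:ℤ) - (n:ℤ)))
          + b * (1 - r₂ ^ 2 - K * r₂ ^ ((2:ℤ) - (n:ℤ))) := by rw [hf1, hf2]
      _ < 1 - r ^ 2 - K * r ^ ((2:ℤ) - (n:ℤ)) := hlt
    rw [hfr r hr0.ne'] at hpos
    rw [mul_div_assoc] at hpos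
    linarith
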